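/- Define φ(q) = (q₁₂/(q₁₂²+ε))·(q₁₂², q₀₁²+q₂₀², q₀₁q₁₂, q₂₀q₁₂) and ψ(k) = (k₁₂/(k₁₂²+ε))·(-k₀₁²-k₂₀², -k₁₂², 2k₀₁k₁₂, 2k₂₀k₁₂) for multivectors q, k in R*_{2,0,1} with ε > 0. If the bivector components of q and k represent points with q₁₂ = k₁₂ = 1, then the Euclidean dot product φ(q)·ψ(k) equals -(1/(1+ε)²)·[(k₀₁-q₀₁)² + (k₂₀-q₂₀)²], i.e., it is proportional to the negative squared distance between the two encoded points. -/
import Mathlib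


noncomputable section

/-- The projective geometric algebra `ℝ*_{2,0,1}`, represented by coefficients over the
basis `1, e₀, e₁, e₂, e₀₁, e₂₀, e₁₂, e₀₁₂` (generators `e₀, e₁, e₂` with `e₀² = 0`,
`e₁² = e₂² = 1`, distinct generators anticommuting). -/
@[ext] structure GA where
  s : ℝ
  c0 : ℝ
  c1 : ℝ
  c2 : ℝ
  c01 : ℝ
  c20 : ℝ
  c12 : ℝ
  c012 : ℝ

namespace GA

instance : Zero GA := ⟨⟨0, 0, 0, 0, 0, 0, 0, 0⟩⟩
instance : One GA := ⟨⟨1, 0, 0, 0, 0, 0, 0, 0⟩⟩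
instance : Add GA :=
  ⟨fun a b => ⟨a.s + b.s, a.c0 + b.c0, a.c1 + b.c1, a.c2 + b.c2,
    a.c01 + b.c01, a.c20 + b.c20, a.c12 + b.c12, a.c012 + b.c012⟩⟩
instance : Neg GA :=
  ⟨fun a => ⟨-a.s, -a.c0, -a.c1, -a.c2, -a.c01, -a.c20, -a.c12, -a.c012⟩⟩
instance : Sub GA := ⟨fun a b => a + -b⟩
instance : SMul ℝ GA :=
  ⟨fun r a => ⟨r * a.s, r * a.c0, r * a.c1, r * a.c2,
    r * a.c01, r * a.c20, r * a.c12, r * a.c012⟩⟩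

/-- The geometric (Clifford) product of `ℝ*_{2,0,1}`. -/
instance : Mul GA :=
  ⟨fun a b =>
    ⟨a.s * b.s + a.c1 * b.c1 + a.c2 * b.c2 - a.c12 * b.c12,
     a.s * b.c0 + a.c0 * b.s - a.c1 * b.c01 + a.c01 * b.c1 + a.c2 * b.c20 - a.c20 * b.c2
       - a.c12 * b.c012 - a.c012 * b.c12,
     a.s * b.c1 + a.c1 * b.s - a.c2 * b.c12 + a.c12 * b.c2,
     a.s * b.c2 + a.c2 * b.s + a.c1 * b.c12 - a.c12 * b.c1,
     a.s * b.c01 + a.c01 * b.s + a.c0 * b.c1 - a.c1 * b.c0 + a.c20 * b.c12 - a.c12 * b.c20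
       + a.c2 * b.c012 + a.c012 * b.c2,
     a.s * b.c20 + a.c20 * b.s + a.c2 * b.c0 - a.c0 * b.c2 - a.c01 * b.c12 + a.c12 * b.c01
       + a.c1 * b.c012 + a.c012 * b.c1,
     a.s * b.c12 + a.c12 * b.s + a.c1 * b.c2 - a.c2 * b.c1,
     a.s * b.c012 + a.c012 * b.s + a.c0 * b.c12 + a.c12 * b.c0 + a.c1 * b.c20
       + a.c20 * b.c1 + a.c2 * b.c01 + a.c01 * b.c2⟩⟩

def e0 : GA := ⟨0, 1, 0, 0, 0, 0, 0, 0⟩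
def e1 : GA := ⟨0, 0, 1, 0, 0, 0, 0, 0⟩
def e2 : GA := ⟨0, 0, 0, 1, 0, 0, 0, 0⟩
def e01 : GA := ⟨0, 0, 0, 0, 1, 0, 0, 0⟩
def e20 : GA := ⟨0, 0, 0, 0, 0, 1, 0, 0⟩
def e12 : GA := ⟨0, 0, 0, 0, 0, 0, 1, 0⟩
def e012 : GA := ⟨0, 0, 0, 0, 0, 0, 0, 1⟩

/-- Encoding of the point `(x, y)` as `x e₂₀ + y e₀₁ + e₁₂`. -/
def pt (x y : ℝ) : GA := x • e20 + y • e01 + e12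

/-- Encoding of the line `a x + b y + c = 0` as `a e₁ + b e₂ + c e₀`. -/
def line (a b c : ℝ) : GA := a • e1 + b • e2 + c • e0

/-- Encoding of the translation by `(a, b)`: `t = 1 - (a/2) e₀₁ + (b/2) e₂₀`. -/
def transl (a b : ℝ) : GA := 1 - (a / 2) • e01 + (b / 2) • e20

/-- The inverse of the translation by `(a, b)`. -/
def translInv (a b : ℝ) : GA := 1 + (a / 2) • e01 - (b / 2) • e20

/-- Encoding of the counterclockwise rotation by angle `θ`:
`r = cos(θ/2) - sin(θ/2) e₁₂`. -/
def rot (θ : ℝ) : GA := Real.cos (θ / 2) • 1 - Real.sin (θ / 2) • e12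

/-- The inverse of the rotation by angle `θ`. -/
def rotInv (θ : ℝ) : GA := Real.cos (θ / 2) • 1 + Real.sin (θ / 2) • e12

/-- The exterior (wedge) product on `ℝ*_{2,0,1}`: bilinear, with `eᵢ ∧ eⱼ = eᵢ eⱼ` for
distinct generators and `v ∧ v = 0` for vectors. -/
def wedge (a b : GA) : GA :=
  ⟨a.s * b.s,
   a.s * b.c0 + a.c0 * b.s,
   a.s * b.c1 + a.c1 * b.s,
   a.s * b.c2 + a.c2 * b.s,
   a.s * b.c01 + a.c01 * b.s + a.c0 * b.c1 - a.c1 * b.c0,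
   a.s * b.c20 + a.c20 * b.s + a.c2 * b.c0 - a.c0 * b.c2,
   a.s * b.c12 + a.c12 * b.s + a.c1 * b.c2 - a.c2 * b.c1,
   a.s * b.c012 + a.c012 * b.s + a.c0 * b.c12 + a.c12 * b.c0 + a.c1 * b.c20
     + a.c20 * b.c1 + a.c2 * b.c01 + a.c01 * b.c2⟩

/-- The multivector dual: reverses the coefficient order on the basis
`1, e₀, e₁, e₂, e₀₁, e₂₀, e₁₂, e₀₁₂`. -/
def dual (a : GA) : GA := ⟨a.c012, a.c12, a.c20, a.c01, a.c2, a.c1, a.c0, a.s⟩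

/-- The join operator: `Join(x, y) = (x* ∧ y*)*`. -/
def join (a b : GA) : GA := dual (wedge (dual a) (dual b))

end GA

open GA

/-- The distance-awareness query feature map `φ`. -/
def phiDA (ε : ℝ) (q : GA) : Fin 4 → ℝ :=
  (q.c12 / (q.c12 ^ 2 + ε)) •
    ![q.c12 ^ 2, q.c01 ^ 2 + q.c20 ^ 2, q.c01 * q.c12, q.c20 * q.c12]

/-- The distance-awareness key feature map `ψ`. -/
def psiDA (ε : ℝ) (k : GA) : Fin 4 → ℝ :=
  (k.c12 / (k.c12 ^ 2 + ε)) •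
    ![-k.c01 ^ 2 - k.c20 ^ 2, -k.c12 ^ 2, 2 * k.c01 * k.c12, 2 * k.c20 * k.c12]

/-- The Euclidean dot product on `ℝ⁴`. -/
def dot4 (u v : Fin 4 → ℝ) : ℝ := ∑ i, u i * v i

/-- If the bivector components of `q` and `k` represent points (`q₁₂ = k₁₂ = 1`), then
`φ(q) · ψ(k)` is proportional to the negative squared distance between the two points. -/
theorem distance_awareness_dot (ε : ℝ) (hε : 0 < ε) (q k : GA)
    (hq : q.c12 = 1) (hk : k.c12 = 1) :
    dot4 (phiDA ε q) (psiDA ε k) =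
      -(1 / (1 + ε) ^ 2) * ((k.c01 - q.c01) ^ 2 + (k.c20 - q.c20) ^ 2) := by
  have h : (1:ℝ) + ε ≠ 0 := by positivity
  simp [dot4, phiDA, psiDA, hq, hk, Fin.sum_univ_four]
  field_simp
  ring
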